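/- Let H = (V,E) be a finite linear hypergraph whose antirank satisfies ar(H) ≥ |V|^{1/2} (equivalently, ar(H)² ≥ |V|). Then the chromatic index of H satisfies q(H) ≤ Δ([H]_2) + 1. -/

import Mathlib

open Finset

variable {V : Type*}

/-- The degree of a vertex `x`: number of hyperedges containing `x`. -/
def hyperDeg [DecidableEq V] (E : Finset (Finset V)) (x : V) : ℕ :=
  (E.filter fun e => x ∈ e).card

/-- A hypergraph is linear if two distinct hyperedges share at most one vertex. -/
def Linear [DecidableEq V] (E : Finset (Finset V)) : Prop :=
  ∀ e ∈ E, ∀ f ∈ E, e ≠ f → (e ∩ f).card ≤ 1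

/-- The degree of a hyperedge `e`: number of other hyperedges meeting `e`. -/
def edgeDeg [DecidableEq V] (E : Finset (Finset V)) (e : Finset V) : ℕ :=
  (E.filter fun a => a ≠ e ∧ (a ∩ e).Nonempty).card

/-- Degree of a vertex in the 2-section of the hypergraph. -/
def deg2 [Fintype V] [DecidableEq V] (E : Finset (Finset V)) (x : V) : ℕ :=
  (Finset.univ.filter fun y => y ≠ x ∧ ∃ e ∈ E, x ∈ e ∧ y ∈ e).card

/-- Maximum degree of the 2-section. -/
def maxDeg2 [Fintype V] [DecidableEq V] (E : Finset (Finset V)) : ℕ :=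
  Finset.univ.sup (deg2 E)

/-- Minimum degree of the 2-section. -/
noncomputable def minDeg2 [Fintype V] [DecidableEq V] (E : Finset (Finset V)) : ℕ :=
  sInf (Set.range (deg2 E))

/-- Maximum vertex degree of the hypergraph. -/
def maxDeg [Fintype V] [DecidableEq V] (E : Finset (Finset V)) : ℕ :=
  Finset.univ.sup (hyperDeg E)

/-- A proper hyperedge coloring with `q` colors. -/
def ColorableWith [DecidableEq V] (E : Finset (Finset V)) (q : ℕ) : Prop :=
  ∃ c : Finset V → Fin q, ∀ e ∈ E, ∀ f ∈ E, e ≠ f → (e ∩ f).Nonempty → c e ≠ c f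

/-- The chromatic index: least number of colors in a proper hyperedge coloring. -/
noncomputable def chromIndex [DecidableEq V] (E : Finset (Finset V)) : ℕ :=
  sInf {q | ColorableWith E q}

set_option linter.unusedSectionVars false
set_option linter.unusedVariables false

variable [Fintype V] [DecidableEq V]

lemma inter_eq_singleton {E : Finset (Finset V)} (hlin : Linear E)
    {a b : Finset V} (ha : a ∈ E) (hb : b ∈ E) (hne : a ≠ b) {x : V}
    (hxa : x ∈ a) (hxb : x ∈ b) : a ∩ b = {x} := by
  have h1 : (a ∩ b).card ≤ 1 := hlin a ha b hb hne
  have hx : x ∈ a ∩ b := mem_inter.2 ⟨hxa, hxb⟩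
  exact Finset.eq_singleton_iff_unique_mem.2
    ⟨hx, fun y hy => Finset.card_le_one.1 h1 y hy x hx⟩

lemma deg2_eq_sum {E : Finset (Finset V)} (hlin : Linear E) (x : V) :
    deg2 E x = ∑ a ∈ E.filter (fun a => x ∈ a), (a.card - 1) := by
  have hset : (Finset.univ.filter fun y => y ≠ x ∧ ∃ e ∈ E, x ∈ e ∧ y ∈ e)
      = (E.filter (fun a => x ∈ a)).biUnion (fun a => a.erase x) := by
    ext y
    simp only [mem_filter, mem_univ, true_and, mem_biUnion, mem_erase]
    constructor
    · rintro ⟨hyx, a, ha, hxa, hya⟩; exact ⟨a, ⟨ha, hxa⟩, hyx, hya⟩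
    · rintro ⟨a, ⟨ha, hxa⟩, hyx, hya⟩; exact ⟨hyx, a, ha, hxa, hya⟩
  rw [deg2, hset, Finset.card_biUnion]
  · exact Finset.sum_congr rfl fun a ha => by
      rw [Finset.card_erase_of_mem (Finset.mem_filter.1 ha).2]
  · intro a ha b hb hab
    have ha' := Finset.mem_filter.1 ha
    have hb' := Finset.mem_filter.1 hb
    rw [Function.onFun, Finset.disjoint_left]
    intro y hya hyb
    have : y ∈ a ∩ b := mem_inter.2 ⟨(Finset.mem_erase.1 hya).2, (Finset.mem_erase.1 hyb).2⟩
    rw [inter_eq_singleton hlin ha'.1 hb'.1 hab ha'.2 hb'.2] at this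
    exact (Finset.mem_erase.1 hya).1 (Finset.mem_singleton.1 this)

lemma deg2_le (E : Finset (Finset V)) (x : V) : deg2 E x ≤ Fintype.card V - 1 := by
  have : (Finset.univ.filter fun y => y ≠ x ∧ ∃ e ∈ E, x ∈ e ∧ y ∈ e) ⊆ Finset.univ.erase x := by
    intro y hy
    exact Finset.mem_erase.2 ⟨(Finset.mem_filter.1 hy).2.1, mem_univ y⟩
  calc deg2 E x ≤ (Finset.univ.erase x).card := Finset.card_le_card this
    _ = Fintype.card V - 1 := by rw [Finset.card_erase_of_mem (mem_univ x), Finset.card_univ]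

lemma deg2_mono {E' E : Finset (Finset V)} (h : E' ⊆ E) (x : V) : deg2 E' x ≤ deg2 E x := by
  apply Finset.card_le_card
  intro y hy
  obtain ⟨-, h1, a, ha, h3⟩ := Finset.mem_filter.1 hy
  exact Finset.mem_filter.2 ⟨mem_univ y, h1, a, h ha, h3⟩

lemma deg2_le_maxDeg2 (E : Finset (Finset V)) (x : V) : deg2 E x ≤ maxDeg2 E :=
  Finset.le_sup (mem_univ x)

lemma maxDeg2_le (E : Finset (Finset V)) (hV : 0 < Fintype.card V) :
    maxDeg2 E + 1 ≤ Fintype.card V := by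
  rw [maxDeg2]
  have : ∀ x ∈ (Finset.univ : Finset V), deg2 E x ≤ Fintype.card V - 1 :=
    fun x _ => deg2_le E x
  have h2 : Finset.univ.sup (deg2 E) ≤ Fintype.card V - 1 := Finset.sup_le this
  omega

lemma sum_deg2 {E : Finset (Finset V)} (hlin : Linear E) {e : Finset V} (he : e ∈ E) :
    ∑ x ∈ e, deg2 E x
      = e.card * (e.card - 1)
        + ∑ a ∈ E.filter (fun a => a ≠ e ∧ (a ∩ e).Nonempty), (a.card - 1) := by
  have step1 : ∑ x ∈ e, deg2 E x = ∑ a ∈ E, (e ∩ a).card * (a.card - 1) := by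
    calc ∑ x ∈ e, deg2 E x
        = ∑ x ∈ e, ∑ a ∈ E.filter (fun a => x ∈ a), (a.card - 1) :=
          Finset.sum_congr rfl fun x _ => deg2_eq_sum hlin x
      _ = ∑ x ∈ e, ∑ a ∈ E, if x ∈ a then (a.card - 1) else 0 :=
          Finset.sum_congr rfl fun x _ => Finset.sum_filter _ _
      _ = ∑ a ∈ E, ∑ x ∈ e, if x ∈ a then (a.card - 1) else 0 := Finset.sum_comm
      _ = ∑ a ∈ E, (e ∩ a).card * (a.card - 1) := by
          refine Finset.sum_congr rfl fun a _ => ?_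
          rw [← Finset.sum_filter, Finset.sum_const, smul_eq_mul]
          have hfe : e.filter (fun x => x ∈ a) = e ∩ a := by
            ext y; simp [Finset.mem_inter]
          rw [hfe]
  rw [step1, ← Finset.add_sum_erase E _ he, Finset.inter_self]
  congr 1
  have h0 : ∀ a ∈ E.erase e,
      (e ∩ a).card * (a.card - 1) = if (a ∩ e).Nonempty then (a.card - 1) else 0 := by
    intro a ha
    obtain ⟨hne, haE⟩ := Finset.mem_erase.1 ha
    by_cases hP : (a ∩ e).Nonempty
    · rw [if_pos hP]
      have h1 : (a ∩ e).card ≤ 1 := hlin a haE e he hne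
      have h2 : 1 ≤ (a ∩ e).card := Finset.card_pos.2 hP
      have h3 : (e ∩ a).card = 1 := by rw [Finset.inter_comm]; omega
      rw [h3, one_mul]
    · rw [if_neg hP]
      have h4 : e ∩ a = ∅ := by
        rw [Finset.inter_comm]; exact Finset.not_nonempty_iff_eq_empty.1 hP
      rw [h4]; simp
  rw [Finset.sum_congr rfl h0, ← Finset.sum_filter]
  congr 1
  ext a
  simp only [Finset.mem_filter, Finset.mem_erase]
  tauto

lemma cov_of_deg2_full {E : Finset (Finset V)} {x : V}
    (h : deg2 E x = Fintype.card V - 1) :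
    ∀ y, y ≠ x → ∃ a ∈ E, x ∈ a ∧ y ∈ a := by
  intro y hy
  have hsub : (Finset.univ.filter fun z => z ≠ x ∧ ∃ a ∈ E, x ∈ a ∧ z ∈ a)
      ⊆ Finset.univ.erase x := fun z hz =>
    Finset.mem_erase.2 ⟨(Finset.mem_filter.1 hz).2.1, mem_univ z⟩
  have hcard : (Finset.univ.erase x).card = Fintype.card V - 1 := by
    rw [Finset.card_erase_of_mem (mem_univ x), Finset.card_univ]
  have heq := Finset.eq_of_subset_of_card_le hsub (by rw [hcard, ← h, deg2])
  have : y ∈ Finset.univ.erase x := Finset.mem_erase.2 ⟨hy, mem_univ y⟩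
  rw [← heq] at this
  exact (Finset.mem_filter.1 this).2.2

lemma degenerate_colorable {E : Finset (Finset V)} {e : Finset V} {k : ℕ}
    (hlin : Linear E) (hk_le : ∀ a ∈ E, k ≤ a.card) (hk2 : 2 ≤ k)
    (heE : e ∈ E) (hek : e.card = k) (hn : Fintype.card V = k * k)
    (hcov : ∀ x ∈ e, ∀ y, y ≠ x → ∃ a ∈ E, x ∈ a ∧ y ∈ a)
    (hT3 : ∀ a ∈ E, a ≠ e → (a ∩ e).Nonempty → a.card = k)
    (hnbcard : (E.filter fun a => a ≠ e ∧ (a ∩ e).Nonempty).card = k * k) :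
    ColorableWith E (k * k) := by
  set nbE := E.filter fun a => a ≠ e ∧ (a ∩ e).Nonempty with hnbE
  -- FACT A : edges disjoint from e are pairwise disjoint
  have factA : ∀ a₁ ∈ E, ∀ a₂ ∈ E, a₁ ≠ a₂ → a₁ ∩ e = ∅ → a₂ ∩ e = ∅ →
      a₁ ∩ a₂ = ∅ := by
    intro a₁ ha₁ a₂ ha₂ hne h1 h2
    by_contra hcon
    obtain ⟨v, hv⟩ := Finset.nonempty_iff_ne_empty.2 hcon
    have hv1 : v ∈ a₁ := (Finset.mem_inter.1 hv).1
    have hv2 : v ∈ a₂ := (Finset.mem_inter.1 hv).2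
    have hve : v ∉ e := fun hve => by
      have : v ∈ a₁ ∩ e := Finset.mem_inter.2 ⟨hv1, hve⟩
      rw [h1] at this; exact absurd this (Finset.notMem_empty v)
    have hch : ∀ x : V, ∃ a, x ∈ e → a ∈ E ∧ x ∈ a ∧ v ∈ a := by
      intro x
      by_cases hx : x ∈ e
      · obtain ⟨a, ha, hxa, hva⟩ := hcov x hx v (fun h => hve (h ▸ hx))
        exact ⟨a, fun _ => ⟨ha, hxa, hva⟩⟩
      · exact ⟨∅, fun h => absurd h hx⟩
    choose f hf using hch
    have hfmeet : ∀ x ∈ e, f x ≠ e ∧ f x ∈ E ∧ x ∈ f x ∧ v ∈ f x := by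
      intro x hx
      obtain ⟨ha, hxa, hva⟩ := hf x hx
      exact ⟨fun h => hve (h ▸ hva), ha, hxa, hva⟩
    have hinj : Set.InjOn f e := by
      intro x hx x' hx' hff
      by_contra hxx
      have h1 := hfmeet x hx
      have h2 := hfmeet x' hx'
      have hcard : (f x ∩ e).card ≤ 1 := hlin _ h1.2.1 e heE h1.1
      have hx'' : x' ∈ f x ∩ e := Finset.mem_inter.2 ⟨hff ▸ h2.2.2.1, hx'⟩
      have hx2 : x ∈ f x ∩ e := Finset.mem_inter.2 ⟨h1.2.2.1, hx⟩
      exact hxx (Finset.card_le_one.1 hcard x hx2 x' hx'')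
    set S := e.image f with hS
    have hScard : S.card = k := by rw [hS, Finset.card_image_of_injOn hinj, hek]
    have hSsub : S ⊆ E.filter (fun a => v ∈ a) := by
      intro a ha
      obtain ⟨x, hx, rfl⟩ := Finset.mem_image.1 ha
      exact Finset.mem_filter.2 ⟨(hfmeet x hx).2.1, (hfmeet x hx).2.2.2⟩
    have ha1S : a₁ ∉ S := by
      intro h
      obtain ⟨x, hx, hfx⟩ := Finset.mem_image.1 h
      have : x ∈ a₁ ∩ e := Finset.mem_inter.2 ⟨hfx ▸ (hfmeet x hx).2.2.1, hx⟩
      rw [h1] at this; exact absurd this (Finset.notMem_empty x)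
    have ha2S : a₂ ∉ S := by
      intro h
      obtain ⟨x, hx, hfx⟩ := Finset.mem_image.1 h
      have : x ∈ a₂ ∩ e := Finset.mem_inter.2 ⟨hfx ▸ (hfmeet x hx).2.2.1, hx⟩
      rw [h2] at this; exact absurd this (Finset.notMem_empty x)
    have hbig : insert a₁ (insert a₂ S) ⊆ E.filter (fun a => v ∈ a) := by
      intro a ha
      rcases Finset.mem_insert.1 ha with rfl | ha
      · exact Finset.mem_filter.2 ⟨ha₁, hv1⟩
      rcases Finset.mem_insert.1 ha with rfl | ha
      · exact Finset.mem_filter.2 ⟨ha₂, hv2⟩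
      · exact hSsub ha
    have hbigcard : (insert a₁ (insert a₂ S)).card = k + 2 := by
      rw [Finset.card_insert_of_notMem, Finset.card_insert_of_notMem ha2S, hScard]
      intro h
      rcases Finset.mem_insert.1 h with h | h
      · exact hne h
      · exact ha1S h
    have hcount : (k + 2) * (k - 1) ≤ deg2 E v := by
      rw [deg2_eq_sum hlin v]
      calc (k+2) * (k-1) = ∑ _a ∈ insert a₁ (insert a₂ S), (k-1) := by
            rw [Finset.sum_const, hbigcard, smul_eq_mul]
        _ ≤ ∑ a ∈ insert a₁ (insert a₂ S), (a.card - 1) := by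
            refine Finset.sum_le_sum fun a ha => ?_
            have := hk_le a (Finset.mem_filter.1 (hbig ha)).1
            omega
        _ ≤ ∑ a ∈ E.filter (fun a => v ∈ a), (a.card - 1) :=
            Finset.sum_le_sum_of_subset hbig
    have hub : deg2 E v ≤ k * k - 1 := by
      have := deg2_le E v; rw [hn] at this; exact this
    have hkk1 : 1 ≤ k * k := by nlinarith
    have key : (k + 2) * (k - 1) + 2 = k * k + k := by
      zify [show (1:ℕ) ≤ k by omega]; ring
    have hub' : deg2 E v + 1 ≤ k * k := (Nat.le_sub_iff_add_le hkk1).1 hub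
    linarith [hcount, key, hub', hk2]
  -- pick x ∈ e, v ∉ e
  obtain ⟨x, hx⟩ : e.Nonempty := Finset.card_pos.1 (by omega)
  have hnuniv : e ≠ Finset.univ := by
    intro hh
    have h5 : e.card = Fintype.card V := by rw [hh, Finset.card_univ]
    rw [hek, hn] at h5
    nlinarith
  obtain ⟨v, -, hve⟩ := Finset.exists_of_ssubset (Finset.ssubset_univ_iff.2 hnuniv)
  obtain ⟨b, hbE, hxb, hvb⟩ := hcov x hx v (fun hh => hve (hh ▸ hx))
  have hbne : b ≠ e := fun hh => hve (hh ▸ hvb)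
  have hbex : b ∩ e = {x} := inter_eq_singleton hlin hbE heE hbne hxb hx
  obtain ⟨y, hye, hyx⟩ := Finset.exists_mem_ne (show 1 < e.card by omega) x
  have hynb : y ∉ b := by
    intro hh
    have h6 : y ∈ b ∩ e := Finset.mem_inter.2 ⟨hh, hye⟩
    rw [hbex] at h6
    exact hyx (Finset.mem_singleton.1 h6)
  -- FACT B: an edge through y disjoint from b
  have hhex : ∃ h ∈ E, y ∈ h ∧ h ∩ b = ∅ := by
    by_contra hcon
    push_neg at hcon
    have hsizes : ∀ a ∈ E.filter (fun a => y ∈ a), a.card = k := by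
      intro a ha
      obtain ⟨haE, hya⟩ := Finset.mem_filter.1 ha
      by_cases hae : a = e
      · rw [hae, hek]
      · exact hT3 a haE hae ⟨y, Finset.mem_inter.2 ⟨hya, hye⟩⟩
    have hdeg : deg2 E y = (E.filter (fun a => y ∈ a)).card * (k - 1) := by
      rw [deg2_eq_sum hlin y,
        Finset.sum_congr rfl (fun a ha => by rw [hsizes a ha]), Finset.sum_const, smul_eq_mul]
    have hnpos : 0 < Fintype.card V := Fintype.card_pos_iff.2 ⟨x⟩
    have h1 : Fintype.card V - 1 ≤ deg2 E y := by
      calc Fintype.card V - 1 = (Finset.univ.erase y).card := by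
            rw [Finset.card_erase_of_mem (mem_univ y), Finset.card_univ]
        _ ≤ _ := Finset.card_le_card (by
            intro z hz
            obtain ⟨hzy, -⟩ := Finset.mem_erase.1 hz
            obtain ⟨a, ha, hya, hza⟩ := hcov y hye z hzy
            exact Finset.mem_filter.2 ⟨mem_univ z, hzy, a, ha, hya, hza⟩)
    have h2 := deg2_le E y
    have hfull : deg2 E y + 1 = k * k := by rw [← hn]; omega
    have hbcard : b.card = k := hT3 b hbE hbne ⟨x, Finset.mem_inter.2 ⟨hxb, hx⟩⟩
    have hchw : ∀ a, ∃ w, a ∈ E.filter (fun a => y ∈ a) → w ∈ a ∩ b := by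
      intro a
      by_cases ha : a ∈ E.filter (fun a => y ∈ a)
      · obtain ⟨haE, hya⟩ := Finset.mem_filter.1 ha
        obtain ⟨w, hw⟩ := hcon a haE hya
        exact ⟨w, fun _ => hw⟩
      · exact ⟨x, fun hh => absurd hh ha⟩
    choose g hg using hchw
    have hinj2 : Set.InjOn g (E.filter (fun a => y ∈ a)) := by
      intro a ha a' ha' hgg
      by_contra haa
      have hw := hg a ha
      have hw' := hg a' ha'
      rw [hgg] at hw
      have hwb : g a' ∈ b := (Finset.mem_inter.1 hw).2
      have hwy : g a' ≠ y := fun hh => hynb (hh ▸ hwb)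
      have hya : y ∈ a := (Finset.mem_filter.1 ha).2
      have hya' : y ∈ a' := (Finset.mem_filter.1 ha').2
      have hc1 : (a ∩ a').card ≤ 1 :=
        hlin a (Finset.mem_filter.1 ha).1 a' (Finset.mem_filter.1 ha').1 haa
      have hm1 : g a' ∈ a ∩ a' :=
        Finset.mem_inter.2 ⟨(Finset.mem_inter.1 hw).1, (Finset.mem_inter.1 hw').1⟩
      have hm2 : y ∈ a ∩ a' := Finset.mem_inter.2 ⟨hya, hya'⟩
      exact hwy (Finset.card_le_one.1 hc1 _ hm1 _ hm2)
    have hdle : (E.filter (fun a => y ∈ a)).card ≤ k := by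
      have h7 := Finset.card_le_card_of_injOn g
        (fun a ha => (Finset.mem_inter.1 (hg a ha)).2) hinj2
      rw [hbcard] at h7
      exact h7
    have hmul : (E.filter (fun a => y ∈ a)).card * (k - 1) ≤ k * (k - 1) :=
      Nat.mul_le_mul_right _ hdle
    have key2 : k * (k - 1) + k = k * k := by
      zify [show (1:ℕ) ≤ k by omega]; ring
    linarith [hdeg, hfull, hmul, key2, hk2]
  obtain ⟨h, hhE, hyh, hhb⟩ := hhex
  have hhne : h ≠ e := by
    intro heq
    have h8 : x ∈ h ∩ b := Finset.mem_inter.2 ⟨heq ▸ hx, hxb⟩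
    rw [hhb] at h8
    exact absurd h8 (Finset.notMem_empty x)
  have hbh : b ≠ h := fun heq => hynb (heq ▸ hyh)
  have hbnb : b ∈ nbE :=
    Finset.mem_filter.2 ⟨hbE, hbne, ⟨x, Finset.mem_inter.2 ⟨hxb, hx⟩⟩⟩
  have hhnb : h ∈ nbE :=
    Finset.mem_filter.2 ⟨hhE, hhne, ⟨y, Finset.mem_inter.2 ⟨hyh, hye⟩⟩⟩
  have hnotnb : ∀ a ∈ E, a ∉ nbE → a = e ∨ a ∩ e = ∅ := by
    intro a haE hanb
    by_cases hae : a = e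
    · exact Or.inl hae
    · right
      by_contra hne'
      exact hanb (Finset.mem_filter.2 ⟨haE, hae, Finset.nonempty_iff_ne_empty.2 hne'⟩)
  let ι : {a // a ∈ nbE} ≃ Fin (k * k) := nbE.equivFinOfCardEq hnbcard
  refine ⟨fun a => if ha : a ∈ nbE then (if a = h then ι ⟨b, hbnb⟩ else ι ⟨a, ha⟩)
    else ι ⟨h, hhnb⟩, ?_⟩
  intro a₁ ha₁ a₂ ha₂ hne12 hint heq
  dsimp only at heq
  have hiota : ∀ (s₁ s₂ : {a // a ∈ nbE}), ι s₁ = ι s₂ → s₁.1 = s₂.1 := by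
    intro s₁ s₂ hss
    exact Subtype.ext_iff.1 (ι.injective hss)
  by_cases h1n : a₁ ∈ nbE <;> by_cases h2n : a₂ ∈ nbE
  · -- both neighbours
    rw [dif_pos h1n, dif_pos h2n] at heq
    by_cases e1 : a₁ = h <;> by_cases e2 : a₂ = h
    · exact hne12 (e1.trans e2.symm)
    · rw [if_pos e1, if_neg e2] at heq
      have : b = a₂ := hiota _ _ heq
      obtain ⟨w, hw⟩ := hint
      rw [e1, ← this] at hw
      have : w ∈ h ∩ b := hw
      rw [hhb] at this
      exact absurd this (Finset.notMem_empty w)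
    · rw [if_neg e1, if_pos e2] at heq
      have h9 : a₁ = b := hiota _ _ heq
      obtain ⟨w, hw⟩ := hint
      rw [h9, e2] at hw
      have h10 : w ∈ h ∩ b :=
        Finset.mem_inter.2 ⟨(Finset.mem_inter.1 hw).2, (Finset.mem_inter.1 hw).1⟩
      rw [hhb] at h10
      exact absurd h10 (Finset.notMem_empty w)
    · rw [if_neg e1, if_neg e2] at heq
      exact hne12 (hiota _ _ heq)
  · -- a₁ nbr, a₂ not
    rw [dif_pos h1n, dif_neg h2n] at heq
    by_cases e1 : a₁ = h
    · rw [if_pos e1] at heq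
      exact hbh (hiota _ _ heq)
    · rw [if_neg e1] at heq
      exact e1 (hiota _ _ heq)
  · rw [dif_neg h1n, dif_pos h2n] at heq
    by_cases e2 : a₂ = h
    · rw [if_pos e2] at heq
      exact hbh ((hiota _ _ heq).symm)
    · rw [if_neg e2] at heq
      exact e2 ((hiota _ _ heq).symm)
  · -- both non-neighbours
    rcases hnotnb a₁ ha₁ h1n with rfl | hd1 <;> rcases hnotnb a₂ ha₂ h2n with h' | hd2
    · exact hne12 h'.symm
    · obtain ⟨w, hw⟩ := hint
      have h11 : w ∈ a₂ ∩ a₁ :=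
        Finset.mem_inter.2 ⟨(Finset.mem_inter.1 hw).2, (Finset.mem_inter.1 hw).1⟩
      rw [hd2] at h11
      exact absurd h11 (Finset.notMem_empty w)
    · subst h'
      obtain ⟨w, hw⟩ := hint
      rw [hd1] at hw
      exact absurd hw (Finset.notMem_empty w)
    · obtain ⟨w, hw⟩ := hint
      rw [factA a₁ ha₁ a₂ ha₂ hne12 hd1 hd2] at hw
      exact absurd hw (Finset.notMem_empty w)

set_option maxHeartbeats 2000000 in
lemma main_colorable {E : Finset (Finset V)} {k : ℕ} (hk2 : 2 ≤ k)
    (hlin : Linear E) (hk_le : ∀ a ∈ E, k ≤ a.card)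
    (har : Fintype.card V ≤ k * k) :
    ∀ (n : ℕ) (E' : Finset (Finset V)), E'.card ≤ n → E' ⊆ E →
      ColorableWith E' (maxDeg2 E + 1) := by
  intro n
  induction n with
  | zero =>
    intro E' hc hs
    have hE0 : E' = ∅ := Finset.card_eq_zero.1 (Nat.le_zero.1 hc)
    subst hE0
    exact ⟨fun _ => ⟨0, by omega⟩, fun a ha => absurd ha (Finset.notMem_empty a)⟩
  | succ n ih =>
    intro E' hc hsub
    rcases Finset.eq_empty_or_nonempty E' with rfl | hne'
    · exact ⟨fun _ => ⟨0, by omega⟩, fun a ha => absurd ha (Finset.notMem_empty a)⟩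
    obtain ⟨e, heE', hemin⟩ := Finset.exists_min_image E' Finset.card hne'
    set D := maxDeg2 E with hD
    set nb := E'.filter (fun a => a ≠ e ∧ (a ∩ e).Nonempty) with hnb
    by_cases hX : nb.card ≤ D
    · -- greedy step
      obtain ⟨c, hcp⟩ := ih (E'.erase e)
        (by have := Finset.card_erase_of_mem heE'; omega)
        (fun a ha => hsub (Finset.mem_of_mem_erase ha))
      have himg : (nb.image c).card ≤ D := le_trans Finset.card_image_le hX
      have hγex : ∃ γ : Fin (D+1), γ ∉ nb.image c := by
        by_contra hcon
        push_neg at hcon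
        have h1 : (Finset.univ : Finset (Fin (D+1))) ⊆ nb.image c := fun γ _ => hcon γ
        have h2 := Finset.card_le_card h1
        rw [Finset.card_univ, Fintype.card_fin] at h2
        omega
      obtain ⟨γ, hγ⟩ := hγex
      refine ⟨Function.update c e γ, ?_⟩
      intro a₁ h₁ a₂ h₂ hne12 hint
      by_cases e1 : a₁ = e <;> by_cases e2 : a₂ = e
      · exact absurd (e1.trans e2.symm) hne12
      · subst e1
        rw [Function.update_self, Function.update_of_ne e2]
        intro heq
        apply hγ
        rw [heq]
        refine Finset.mem_image_of_mem c (Finset.mem_filter.2 ⟨h₂, e2, ?_⟩)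
        obtain ⟨w, hw⟩ := hint
        exact ⟨w, Finset.mem_inter.2 ⟨(Finset.mem_inter.1 hw).2, (Finset.mem_inter.1 hw).1⟩⟩
      · subst e2
        rw [Function.update_self, Function.update_of_ne e1]
        intro heq
        apply hγ
        rw [← heq]
        exact Finset.mem_image_of_mem c (Finset.mem_filter.2 ⟨h₁, e1, hint⟩)
      · rw [Function.update_of_ne e1, Function.update_of_ne e2]
        exact hcp a₁ (Finset.mem_erase.2 ⟨e1, h₁⟩) a₂ (Finset.mem_erase.2 ⟨e2, h₂⟩) hne12 hint
    · -- degenerate case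
      push_neg at hX
      have hnbD : D + 1 ≤ nb.card := hX
      have hlin' : Linear E' := fun a ha b hb => hlin a (hsub ha) b (hsub hb)
      have heE : e ∈ E := hsub heE'
      have hmk : k ≤ e.card := hk_le e heE
      have hnV : 0 < Fintype.card V := by
        have h0 := Finset.card_le_univ e
        omega
      have hA : ∑ x ∈ e, deg2 E x ≤ e.card * D := by
        calc ∑ x ∈ e, deg2 E x ≤ ∑ _x ∈ e, D :=
              Finset.sum_le_sum (fun x _ => deg2_le_maxDeg2 E x)
          _ = e.card * D := by rw [Finset.sum_const, smul_eq_mul]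
      have hBA : ∑ x ∈ e, deg2 E' x ≤ ∑ x ∈ e, deg2 E x :=
        Finset.sum_le_sum fun x _ => deg2_mono hsub x
      have hB : ∑ x ∈ e, deg2 E' x = e.card * (e.card - 1) + ∑ a ∈ nb, (a.card - 1) :=
        sum_deg2 hlin' heE'
      have hCl : nb.card * (e.card - 1) ≤ ∑ a ∈ nb, (a.card - 1) := by
        calc nb.card * (e.card - 1) = ∑ _a ∈ nb, (e.card - 1) := by
              rw [Finset.sum_const, smul_eq_mul]
          _ ≤ _ := Finset.sum_le_sum fun a ha => by
              have h1 := hemin a (Finset.mem_filter.1 ha).1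
              omega
      obtain ⟨q, hqm⟩ : ∃ q, e.card = q + 1 := ⟨e.card - 1, by omega⟩
      have hmul1 : (D+1) * (e.card - 1) ≤ nb.card * (e.card - 1) :=
        Nat.mul_le_mul_right _ hnbD
      have h1 : e.card * (e.card - 1) + (D+1) * (e.card - 1) ≤ e.card * D := by
        calc e.card * (e.card-1) + (D+1)*(e.card-1)
            ≤ e.card * (e.card-1) + nb.card * (e.card-1) := by omega
          _ ≤ e.card * (e.card-1) + ∑ a ∈ nb, (a.card - 1) := by omega
          _ = ∑ x ∈ e, deg2 E' x := hB.symm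
          _ ≤ ∑ x ∈ e, deg2 E x := hBA
          _ ≤ e.card * D := hA
      have harith : e.card * e.card ≤ D + 1 := by
        rw [hqm] at h1 ⊢
        simp only [Nat.add_sub_cancel] at h1
        nlinarith [h1]
      have hDn : D + 1 ≤ Fintype.card V := maxDeg2_le E hnV
      have hkk : k * k ≤ e.card * e.card := Nat.mul_le_mul hmk hmk
      have hc1 : D + 1 = Fintype.card V := le_antisymm hDn (by linarith)
      have hc2 : Fintype.card V = k * k := le_antisymm har (by linarith)
      have hc3 : e.card = k := by
        by_contra hne3
        have hlt : k < e.card := lt_of_le_of_ne hmk (Ne.symm hne3)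
        have : k * k < e.card * e.card := by nlinarith
        linarith
      have e0 : e.card * (e.card - 1) + (D+1) * (e.card - 1) = e.card * D := by
        have hD1 : D + 1 = (q+1) * (q+1) := by rw [← hqm]; linarith
        rw [hqm]
        simp only [Nat.add_sub_cancel]
        have hexp : (q+1)*(q+1) = q*q + 2*q + 1 := by ring
        have hDval : D = q*q + 2*q := by linarith
        rw [hDval]; ring
      have heqA : ∑ x ∈ e, deg2 E x = e.card * D := le_antisymm hA (by linarith)
      have heqB : ∑ x ∈ e, deg2 E' x = ∑ x ∈ e, deg2 E x := le_antisymm hBA (by linarith)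
      have heqC : ∑ a ∈ nb, (a.card - 1) = nb.card * (e.card - 1) := by
        have hup : ∑ a ∈ nb, (a.card - 1) ≤ (D+1) * (e.card - 1) := by linarith
        exact le_antisymm (le_trans hup hmul1) hCl
      have heqN : nb.card = D + 1 := by
        have h2 : nb.card * (e.card - 1) = (D+1) * (e.card - 1) := by linarith
        have h3 : 0 < e.card - 1 := by omega
        exact Nat.eq_of_mul_eq_mul_right h3 h2
      have hdegE : ∀ x ∈ e, deg2 E x = D := by
        intro x hxe
        by_contra hne2
        have hlt : deg2 E x < D := lt_of_le_of_ne (deg2_le_maxDeg2 E x) hne2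
        have h4 : ∑ x ∈ e, deg2 E x < ∑ _x ∈ e, D :=
          Finset.sum_lt_sum (fun i _ => deg2_le_maxDeg2 E i) ⟨x, hxe, hlt⟩
        rw [Finset.sum_const, smul_eq_mul] at h4
        omega
      have hdegE' : ∀ x ∈ e, deg2 E' x = deg2 E x := by
        intro x hxe
        by_contra hne2
        have hlt : deg2 E' x < deg2 E x := lt_of_le_of_ne (deg2_mono hsub x) hne2
        have h4 : ∑ x ∈ e, deg2 E' x < ∑ x ∈ e, deg2 E x :=
          Finset.sum_lt_sum (fun i _ => deg2_mono hsub i) ⟨x, hxe, hlt⟩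
        omega
      have hsize : ∀ a ∈ nb, a.card = e.card := by
        intro a ha
        by_contra hne2
        have hge : e.card ≤ a.card := hemin a (Finset.mem_filter.1 ha).1
        have hlt : e.card - 1 < a.card - 1 := by omega
        have h4 : ∑ _a ∈ nb, (e.card - 1) < ∑ a ∈ nb, (a.card - 1) :=
          Finset.sum_lt_sum (fun a ha2 => by
            have := hemin a (Finset.mem_filter.1 ha2).1; omega) ⟨a, ha, hlt⟩
        rw [Finset.sum_const, smul_eq_mul] at h4
        omega
      have hfiltereq : ∀ x ∈ e, E.filter (fun a => x ∈ a) = E'.filter (fun a => x ∈ a) := by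
        intro x hxe
        have hsub2 : E'.filter (fun a => x ∈ a) ⊆ E.filter (fun a => x ∈ a) := by
          intro a ha
          exact Finset.mem_filter.2 ⟨hsub (Finset.mem_filter.1 ha).1, (Finset.mem_filter.1 ha).2⟩
        refine (Finset.Subset.antisymm ?_ hsub2)
        by_contra hcon
        obtain ⟨a, haE, haE'⟩ := Finset.not_subset.1 hcon
        have hstrict : ∑ a ∈ E'.filter (fun a => x ∈ a), (a.card - 1)
            < ∑ a ∈ E.filter (fun a => x ∈ a), (a.card - 1) := by
          refine Finset.sum_lt_sum_of_subset hsub2 haE haE' ?_ (fun j _ _ => Nat.zero_le _)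
          have := hk_le a (Finset.mem_filter.1 haE).1
          omega
        rw [← deg2_eq_sum hlin x, ← deg2_eq_sum hlin' x] at hstrict
        rw [hdegE' x hxe] at hstrict
        omega
      have hT3 : ∀ a ∈ E, a ≠ e → (a ∩ e).Nonempty → a.card = k := by
        intro a haE hane hint
        obtain ⟨w, hw⟩ := hint
        have hwa : w ∈ a := (Finset.mem_inter.1 hw).1
        have hwe : w ∈ e := (Finset.mem_inter.1 hw).2
        have h5 : a ∈ E'.filter (fun b => w ∈ b) := by
          rw [← hfiltereq w hwe]; exact Finset.mem_filter.2 ⟨haE, hwa⟩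
        have haE'2 : a ∈ E' := (Finset.mem_filter.1 h5).1
        have h6 : a ∈ nb := Finset.mem_filter.2 ⟨haE'2, hane, ⟨w, hw⟩⟩
        rw [hsize a h6, hc3]
      have hnbEeq : E.filter (fun a => a ≠ e ∧ (a ∩ e).Nonempty) = nb := by
        refine Finset.Subset.antisymm ?_ (fun a ha => by
          obtain ⟨ha1, ha2⟩ := Finset.mem_filter.1 ha
          exact Finset.mem_filter.2 ⟨hsub ha1, ha2⟩)
        intro a ha
        obtain ⟨haE, hane, hint⟩ := Finset.mem_filter.1 ha
        obtain ⟨w, hw⟩ := hint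
        have hwe : w ∈ e := (Finset.mem_inter.1 hw).2
        have h5 : a ∈ E'.filter (fun b => w ∈ b) := by
          rw [← hfiltereq w hwe]
          exact Finset.mem_filter.2 ⟨haE, (Finset.mem_inter.1 hw).1⟩
        exact Finset.mem_filter.2 ⟨(Finset.mem_filter.1 h5).1, hane, ⟨w, hw⟩⟩
      have hnbEcard : (E.filter (fun a => a ≠ e ∧ (a ∩ e).Nonempty)).card = k * k := by
        rw [hnbEeq, heqN]; linarith
      have hcov : ∀ x ∈ e, ∀ y, y ≠ x → ∃ a ∈ E, x ∈ a ∧ y ∈ a := by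
        intro x hxe
        apply cov_of_deg2_full
        rw [hdegE x hxe]
        omega
      have hcolE : ColorableWith E (k * k) :=
        degenerate_colorable hlin hk_le hk2 heE hc3 hc2 hcov hT3 hnbEcard
      have hkkD : k * k = D + 1 := by linarith
      rw [hkkD] at hcolE
      obtain ⟨c, hcp⟩ := hcolE
      exact ⟨c, fun a ha b hb => hcp a (hsub ha) b (hsub hb)⟩

theorem stmt1 {V : Type*} [Fintype V] [DecidableEq V] (E : Finset (Finset V)) (k : ℕ)
    (hlin : Linear E) (hne : E.Nonempty)
    (hk_le : ∀ e ∈ E, k ≤ e.card) (hk_mem : ∃ e ∈ E, e.card = k)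
    (har : Fintype.card V ≤ k ^ 2) :
    chromIndex E ≤ maxDeg2 E + 1 := by
  have hcol : ColorableWith E (maxDeg2 E + 1) := by
    by_cases hk2 : 2 ≤ k
    · exact main_colorable hk2 hlin hk_le (by rw [pow_two] at har; exact har)
        E.card E le_rfl (Finset.Subset.refl E)
    · have hV1 : Fintype.card V ≤ 1 := by
        have h0 : k = 0 ∨ k = 1 := by omega
        rcases h0 with rfl | rfl <;> simp at har <;> omega
      haveI hsing : Subsingleton V := Fintype.card_le_one_iff_subsingleton.1 hV1
      refine ⟨fun _ => ⟨0, by omega⟩, ?_⟩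
      intro a ha b hb hab hint
      exfalso
      obtain ⟨w, hw⟩ := hint
      apply hab
      ext z
      constructor
      · intro hz
        have hzw : z = w := Subsingleton.elim z w
        rw [hzw]
        exact (Finset.mem_inter.1 hw).2
      · intro hz
        have hzw : z = w := Subsingleton.elim z w
        rw [hzw]
        exact (Finset.mem_inter.1 hw).1
  exact Nat.sInf_le hcol
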